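/- The Euler operator annihilates the product of the discrete characteristic and the EC(λ) scheme: fix Δx > 0, Δt > 0, λ ∈ ℝ. For a grid function u : ℤ × ℤ → ℝ define φ(i,j) = (1/3)·[(u(i,j)² + u(i,j+1)²)/2]·[(u(i,j) + u(i,j+1))/2] + (1/2)·Σ_{j'∈{j,j+1}} (u(i+1,j') − 2u(i,j') + u(i−1,j'))/Δx² + λ·Δx²·[ (u(i+1,j+1) − u(i−1,j+1)) − (u(i+1,j) − u(i−1,j)) ]/(2·Δx·Δt), Ã(i,j) = (φ(i+1,j) − φ(i−1,j))/(2Δx) + (u(i,j+1) − u(i,j))/Δt, and let P(u)(i,j) = φ(i,j)·Ã(i,j), a function of the grid values u(i+a, j+b) for a ∈ {−2,…,2} and b ∈ {0,1}. Then the discrete Euler operator applied to P vanishes identically: for every grid function u and every (m,n) ∈ ℤ × ℤ, the finite sum over the stencil offsets (a,b), a ∈ {−2,−1,0,1,2}, b ∈ {0,1}, of the partial derivative of the stencil function defining P with respect to its (a,b)-entry, evaluated on the window of u based at (m−a, n−b), equals 0. -/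

import Mathlib

noncomputable section

/-- The discrete characteristic `φ = Q̃₃` of the EC(λ) schemes. -/
def phiD (dx dt lam : ℝ) (u : ℤ × ℤ → ℝ) (i j : ℤ) : ℝ :=
  (1 / 3) * ((u (i, j) ^ 2 + u (i, j + 1) ^ 2) / 2) * ((u (i, j) + u (i, j + 1)) / 2)
  + (1 / 2) * ((u (i + 1, j) - 2 * u (i, j) + u (i - 1, j)) / dx ^ 2
             + (u (i + 1, j + 1) - 2 * u (i, j + 1) + u (i - 1, j + 1)) / dx ^ 2)
  + lam * dx ^ 2 * ((u (i + 1, j + 1) - u (i - 1, j + 1)) - (u (i + 1, j) - u (i - 1, j)))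
      / (2 * dx * dt)

/-- The EC(λ) finite difference scheme `Ã` for the mKdV equation. -/
def schemeA (dx dt lam : ℝ) (u : ℤ × ℤ → ℝ) (i j : ℤ) : ℝ :=
  (phiD dx dt lam u (i + 1) j - phiD dx dt lam u (i - 1) j) / (2 * dx)
  + (u (i, j + 1) - u (i, j)) / dt

/-- The stencil function defining the grid expression `P(u)(i,j) = φ(i,j)·Ã(i,j)`:
its argument `w : Fin 5 × Fin 2 → ℝ` collects the grid values `u(i+a, j+b)` for
offsets `a ∈ {−2,…,2}` (encoded as `a + 2 ∈ Fin 5`) and `b ∈ {0,1}`. -/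
def stencilF (dx dt lam : ℝ) (w : Fin 5 × Fin 2 → ℝ) : ℝ :=
  let v : ℤ → ℤ → ℝ := fun a b =>
    w (⟨(a + 2).toNat % 5, by omega⟩, ⟨b.toNat % 2, by omega⟩)
  let phiL : ℤ → ℝ := fun a =>
    (1 / 3) * ((v a 0 ^ 2 + v a 1 ^ 2) / 2) * ((v a 0 + v a 1) / 2)
    + (1 / 2) * ((v (a + 1) 0 - 2 * v a 0 + v (a - 1) 0) / dx ^ 2
               + (v (a + 1) 1 - 2 * v a 1 + v (a - 1) 1) / dx ^ 2)
    + lam * dx ^ 2 * ((v (a + 1) 1 - v (a - 1) 1) - (v (a + 1) 0 - v (a - 1) 0))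
        / (2 * dx * dt)
  phiL 0 * ((phiL 1 - phiL (-1)) / (2 * dx) + (v 0 1 - v 0 0) / dt)

/-- The window of the grid function `u` based at `(i,j)`, as an argument for the
stencil function `stencilF`. -/
def window (u : ℤ × ℤ → ℝ) (i j : ℤ) : Fin 5 × Fin 2 → ℝ :=
  fun d => u (i + (((d.1 : ℕ) : ℤ) - 2), j + ((d.2 : ℕ) : ℤ))

/-- Auxiliary: the `φ` part of the stencil as a function of six values. -/
def phiX (dx dt lam l0 l1 c0 c1 r0 r1 : ℝ) : ℝ :=
  (1/3)*((c0^2+c1^2)/2)*((c0+c1)/2) + (1/2)*((r0-2*c0+l0)/dx^2 + (r1-2*c1+l1)/dx^2)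
  + lam*dx^2*((r1-l1)-(r0-l0))/(2*dx*dt)

/-- Auxiliary: the differential of `phiX`. -/
def dphiX (dx dt lam c0 c1 l0' l1' c0' c1' r0' r1' : ℝ) : ℝ :=
  (2*c0*(c0+c1) + (c0^2+c1^2))/12 * c0' + (2*c1*(c0+c1) + (c0^2+c1^2))/12 * c1'
  + (1/2)*((r0'-2*c0'+l0')/dx^2 + (r1'-2*c1'+l1')/dx^2)
  + lam*dx^2*((r1'-l1')-(r0'-l0'))/(2*dx*dt)

set_option maxHeartbeats 2000000 in
set_option maxRecDepth 100000 in
theorem key_fderiv_stencilF (dx dt lam : ℝ) (x y : Fin 5 × Fin 2 → ℝ) :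
    fderiv ℝ (stencilF dx dt lam) x y =
      ((phiX dx dt lam (x (2,0)) (x (2,1)) (x (3,0)) (x (3,1)) (x (4,0)) (x (4,1))
         - phiX dx dt lam (x (0,0)) (x (0,1)) (x (1,0)) (x (1,1)) (x (2,0)) (x (2,1))) / (2*dx)
        + (x (2,1) - x (2,0)) / dt)
        * dphiX dx dt lam (x (2,0)) (x (2,1)) (y (1,0)) (y (1,1)) (y (2,0)) (y (2,1)) (y (3,0)) (y (3,1))
      + phiX dx dt lam (x (1,0)) (x (1,1)) (x (2,0)) (x (2,1)) (x (3,0)) (x (3,1))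
        * ((dphiX dx dt lam (x (3,0)) (x (3,1)) (y (2,0)) (y (2,1)) (y (3,0)) (y (3,1)) (y (4,0)) (y (4,1))
            - dphiX dx dt lam (x (1,0)) (x (1,1)) (y (0,0)) (y (0,1)) (y (1,0)) (y (1,1)) (y (2,0)) (y (2,1))) / (2*dx)
           + (y (2,1) - y (2,0)) / dt) := by
  have hF : stencilF dx dt lam = fun w : Fin 5 × Fin 2 → ℝ =>
      ((1 / 3) * ((w (2,0) ^ 2 + w (2,1) ^ 2) / 2) * ((w (2,0) + w (2,1)) / 2)
        + (1 / 2) * ((w (3,0) - 2 * w (2,0) + w (1,0)) / dx ^ 2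
                   + (w (3,1) - 2 * w (2,1) + w (1,1)) / dx ^ 2)
        + lam * dx ^ 2 * ((w (3,1) - w (1,1)) - (w (3,0) - w (1,0))) / (2 * dx * dt))
      * ((((1 / 3) * ((w (3,0) ^ 2 + w (3,1) ^ 2) / 2) * ((w (3,0) + w (3,1)) / 2)
          + (1 / 2) * ((w (4,0) - 2 * w (3,0) + w (2,0)) / dx ^ 2
                     + (w (4,1) - 2 * w (3,1) + w (2,1)) / dx ^ 2)
          + lam * dx ^ 2 * ((w (4,1) - w (2,1)) - (w (4,0) - w (2,0))) / (2 * dx * dt))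
         - ((1 / 3) * ((w (1,0) ^ 2 + w (1,1) ^ 2) / 2) * ((w (1,0) + w (1,1)) / 2)
          + (1 / 2) * ((w (2,0) - 2 * w (1,0) + w (0,0)) / dx ^ 2
                     + (w (2,1) - 2 * w (1,1) + w (0,1)) / dx ^ 2)
          + lam * dx ^ 2 * ((w (2,1) - w (0,1)) - (w (2,0) - w (0,0))) / (2 * dx * dt))) / (2 * dx)
        + (w (2,1) - w (2,0)) / dt) := rfl
  rw [hF]
  have hproj : ∀ (i : Fin 5 × Fin 2) (x : Fin 5 × Fin 2 → ℝ),
      fderiv ℝ (fun y => y i) x = ContinuousLinearMap.proj i :=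
    fun i x => (hasFDerivAt_apply i x).fderiv
  simp (disch := fun_prop) only [pow_two, div_eq_mul_inv, fderiv_fun_add, fderiv_fun_sub, fderiv_fun_mul,
    fderiv_mul_const, hproj, fderiv_fun_const, Pi.zero_apply, ContinuousLinearMap.add_apply,
    ContinuousLinearMap.sub_apply, ContinuousLinearMap.zero_apply,
    ContinuousLinearMap.smul_apply, ContinuousLinearMap.proj_apply,
    Pi.smul_apply, smul_eq_mul, Pi.single_apply]
  unfold phiX dphiX
  ring

set_option maxHeartbeats 4000000 in
set_option maxRecDepth 100000 in
/-- The discrete Euler operator annihilates the product `P = Q̃₃·Ã = φ·Ã` of the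
discrete characteristic and the EC(λ) scheme: the stencil function `stencilF`
represents `P` on windows of grid values, and for every grid function `u` and every
grid point `(m,n)` the sum over the stencil offsets of the partial derivatives of
`stencilF`, each evaluated on the window of `u` based at the back-shifted point,
vanishes. -/
theorem euler_annihilates_EC_energy_product
    (dx dt lam : ℝ) (hdx : 0 < dx) (hdt : 0 < dt) :
    (∀ u : ℤ × ℤ → ℝ, ∀ i j : ℤ,
      stencilF dx dt lam (window u i j) = phiD dx dt lam u i j * schemeA dx dt lam u i j)
    ∧ (∀ u : ℤ × ℤ → ℝ, ∀ m n : ℤ,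
        ∑ c : Fin 5 × Fin 2,
          fderiv ℝ (stencilF dx dt lam)
            (window u (m - (((c.1 : ℕ) : ℤ) - 2)) (n - ((c.2 : ℕ) : ℤ)))
            (Pi.single c 1) = 0) := by
  constructor
  · intro u i j
    norm_num [stencilF, window, phiD, schemeA]
    ring_nf
  · intro u m n
    simp only [Fintype.sum_prod_type, Fin.sum_univ_five, Fin.sum_univ_two,
      key_fderiv_stencilF dx dt lam]
    simp (config := { decide := true }) only [Pi.single_apply]
    simp only [window, show ((0:Fin 5):ℕ) = 0 from rfl, show ((1:Fin 5):ℕ) = 1 from rfl,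
      show ((2:Fin 5):ℕ) = 2 from rfl, show ((3:Fin 5):ℕ) = 3 from rfl,
      show ((4:Fin 5):ℕ) = 4 from rfl, show ((0:Fin 2):ℕ) = 0 from rfl,
      show ((1:Fin 2):ℕ) = 1 from rfl, Nat.cast_ofNat, Nat.cast_zero, Nat.cast_one]
    norm_num only
    simp only [if_true, if_false]
    ring_nf
    unfold phiX dphiX
    ring
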